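/- arXiv:2410.16247 — 2 statements merged into one kernel-verified Lean document; each statement's English description precedes it below -/
import Mathlib

section
/- With the signal–noise decomposition U_t = U_t*W_t*W_tᵀ + U_t*W_{t,⊥}*W_{t,⊥}ᵀ: (i) the tensor-column space of the noise term is orthogonal to that of X, i.e. V_Xᵀ*U_t*W_{t,⊥}*W_{t,⊥}ᵀ = 0; (ii) if V_Xᵀ*U_t has full tubal rank r with all singular tubes invertible (equivalently every Fourier slice (V_Xᵀ*U_t)‾^{(j)} has full rank r), then the signal term U_t*W_t*W_tᵀ has tubal rank r with all singular tubes invertible, and the noise term U_t*W_{t,⊥}*W_{t,⊥}ᵀ has tubal rank at most R − r. -/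
open scoped BigOperators ComplexOrder
open MeasureTheory

namespace Tubal

/-- A real tubal tensor of size `m × n × k`. -/
abbrev Tensor (m n k : ℕ) := Fin m → Fin n → Fin k → ℝ

/-- The `j`-th Fourier-domain (frontal) slice of a tubal tensor. -/
noncomputable def slice {m n k : ℕ} (T : Tensor m n k) (j : Fin k) :
    Matrix (Fin m) (Fin n) ℂ := fun i i' =>
  ∑ j' : Fin k, (T i i' j' : ℂ) *
    Complex.exp (-(2 * (Real.pi : ℂ) * Complex.I * ((j : ℕ) : ℂ) * ((j' : ℕ) : ℂ)) / ((k : ℕ) : ℂ))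

/-- The tubal product (t-product) of two tubal tensors. -/
def tprod {m q n k : ℕ} (A : Tensor m q k) (B : Tensor q n k) : Tensor m n k :=
  fun i i' l => ∑ p : Fin q, ∑ l' : Fin k, A i p l' * B p i' (l - l')

/-- The tubal transpose. -/
def ttr {m n k : ℕ} (T : Tensor m n k) : Tensor n m k := fun i i' j => T i' i (-j)

/-- The identity tubal tensor. -/
def tId (n k : ℕ) : Tensor n n k := fun i i' j => if i = i' ∧ (j : ℕ) = 0 then 1 else 0

/-- Frobenius norm of a tubal tensor. -/
noncomputable def frobNorm {m n k : ℕ} (T : Tensor m n k) : ℝ :=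
  Real.sqrt (∑ i, ∑ i', ∑ j, (T i i' j) ^ 2)

/-- Entrywise inner product of tubal tensors. -/
def tinner {m n k : ℕ} (T S : Tensor m n k) : ℝ := ∑ i, ∑ i', ∑ j, T i i' j * S i i' j

/-- ℓ₂-operator norm of a complex matrix. -/
noncomputable def matOpNorm {m n : ℕ} (M : Matrix (Fin m) (Fin n) ℂ) : ℝ :=
  ‖LinearMap.toContinuousLinearMap (Matrix.toEuclideanLin M)‖

/-- Tensor spectral norm: max over Fourier slices of operator norm. -/
noncomputable def specNorm {m n k : ℕ} (T : Tensor m n k) : ℝ :=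
  ⨆ j : Fin k, matOpNorm (slice T j)

/-- `i`-th largest singular value (0-based index into `Fin n`). -/
noncomputable def svalIdx {m n : ℕ} (M : Matrix (Fin m) (Fin n) ℂ) (i : Fin n) : ℝ :=
  Real.sqrt (((Matrix.isHermitian_conjTranspose_mul_self M).eigenvalues)
    ((Tuple.sort ((Matrix.isHermitian_conjTranspose_mul_self M).eigenvalues)) i.rev))

/-- `i`-th largest singular value of a matrix, `1`-based (σ₁ is the largest). -/
noncomputable def sval {m n : ℕ} (M : Matrix (Fin m) (Fin n) ℂ) (i : ℕ) : ℝ :=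
  if h : i - 1 < n then svalIdx M ⟨i - 1, h⟩ else 0

/-- Smallest singular value of an `m × n` matrix. -/
noncomputable def sminMat {m n : ℕ} (M : Matrix (Fin m) (Fin n) ℂ) : ℝ :=
  sval M (min m n)

/-- σ_min of the block-diagonal Fourier representation of a tensor:
the minimum over slices of the smallest singular value. -/
noncomputable def tSMin {m n k : ℕ} (T : Tensor m n k) : ℝ :=
  ⨅ j : Fin k, sminMat (slice T j)

/-- The tubal rank: maximum over slices of the matrix rank. -/
noncomputable def trank {m n k : ℕ} (T : Tensor m n k) : ℕ :=
  Finset.univ.sup fun j : Fin k => (slice T j).rank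

/-- Condition number `κ(T) = σ₁(T̄)/σ_{min{m,n}k}(T̄)`. -/
noncomputable def cond {m n k : ℕ} (T : Tensor m n k) : ℝ := specNorm T / tSMin T

/-- Tensor nuclear norm `(1/k)·Σ_{j,i} σ_i(T̄^{(j)})`. -/
noncomputable def nucNorm {m n k : ℕ} (T : Tensor m n k) : ℝ :=
  (1 / (k : ℝ)) * ∑ j : Fin k, ∑ i : Fin n, svalIdx (slice T j) i

/-- The linear measurement map `𝒜`. -/
def Ameas {n k m : ℕ} (A : Fin m → Tensor n n k) (Z : Tensor n n k) : Fin m → ℝ :=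
  fun i => tinner (A i) Z

/-- `𝒜*𝒜`. -/
def AtA {n k m : ℕ} (A : Fin m → Tensor n n k) (Z : Tensor n n k) : Tensor n n k :=
  fun p q l => ∑ i, tinner (A i) Z * A i p q l

/-- Restricted isometry property of rank `r` with constant `δ`. -/
def RIP {n k m : ℕ} (A : Fin m → Tensor n n k) (r : ℕ) (δ : ℝ) : Prop :=
  ∀ Z : Tensor n n k, ttr Z = Z → trank Z ≤ r →
    (1 - δ) * frobNorm Z ^ 2 ≤ ∑ i, (tinner (A i) Z) ^ 2 ∧
      ∑ i, (tinner (A i) Z) ^ 2 ≤ (1 + δ) * frobNorm Z ^ 2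

/-- Spectral-to-nuclear restricted isometry property. -/
def S2NRIP {n k m : ℕ} (A : Fin m → Tensor n n k) (δ : ℝ) : Prop :=
  ∀ Z : Tensor n n k, ttr Z = Z → specNorm (Z - AtA A Z) ≤ δ * nucNorm Z

/-- One gradient-descent step `U ↦ [𝕀 + μ(𝒜*𝒜)(X*Xᵀ − U*Uᵀ)]*U`. -/
noncomputable def gdStep {n r R k m : ℕ} (A : Fin m → Tensor n n k) (X : Tensor n r k)
    (μ : ℝ) (U : Tensor n R k) : Tensor n R k :=
  tprod (tId n k + μ • AtA A (tprod X (ttr X) - tprod U (ttr U))) U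

/-- Gradient descent iterates. -/
noncomputable def gdIter {n r R k m : ℕ} (A : Fin m → Tensor n n k) (X : Tensor n r k)
    (μ : ℝ) (U0 : Tensor n R k) : ℕ → Tensor n R k
  | 0 => U0
  | t + 1 => gdStep A X μ (gdIter A X μ U0 t)

/-- `t`-fold tubal power. -/
noncomputable def tpow {n k : ℕ} (T : Tensor n n k) : ℕ → Tensor n n k
  | 0 => tId n k
  | t + 1 => tprod T (tpow T t)

/-- Block-diagonal Fourier-domain matrix representation of a tensor. -/
noncomputable def bdiag {m n k : ℕ} (T : Tensor m n k) :
    Matrix (Fin k × Fin m) (Fin k × Fin n) ℂ :=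
  fun p q => if p.1 = q.1 then slice T p.1 p.2 q.2 else 0

/-- ℓ₂ norm of a complex vector. -/
noncomputable def l2norm {ι : Type*} [Fintype ι] (w : ι → ℂ) : ℝ :=
  Real.sqrt (∑ i, Complex.normSq (w i))

/-- i.i.d. Gaussian measure on tubal tensors, each entry `N(0, v)`. -/
noncomputable def gaussianTensor (n R k : ℕ) (v : NNReal) : Measure (Tensor n R k) :=
  Measure.pi fun _ => Measure.pi fun _ => Measure.pi fun _ =>
    ProbabilityTheory.gaussianReal 0 v

/-- The first `r` tensor columns. -/
def cols {a p k : ℕ} (T : Tensor a p k) (r : ℕ) (h : r ≤ p) : Tensor a r k :=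
  fun i s j => T i (Fin.castLE h s) j

/-- `W` is orthonormal: `Wᵀ*W = 𝕀`. -/
def ONB {p q k : ℕ} (W : Tensor p q k) : Prop := tprod (ttr W) W = tId q k

/-- `Q` is an orthogonal tubal tensor. -/
def Orthogonal {p k : ℕ} (Q : Tensor p p k) : Prop :=
  tprod Q (ttr Q) = tId p k ∧ tprod (ttr Q) Q = tId p k

/-- `V` is an orthonormal basis for the tensor-column space of `Y`. -/
def IsColBasis {a b q k : ℕ} (Y : Tensor a b k) (V : Tensor a q k) : Prop :=
  ONB V ∧ tprod V (tprod (ttr V) Y) = Y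

/-- `Vp` is an orthonormal complement of the orthonormal `V`. -/
def IsOrthCompl {a q q' k : ℕ} (V : Tensor a q k) (Vp : Tensor a q' k) : Prop :=
  ONB Vp ∧ tprod (ttr Vp) V = 0 ∧
    tprod V (ttr V) + tprod Vp (ttr Vp) = tId a k

/-- `S` is an f-diagonal tensor with nonnegative, nonincreasing (real) diagonal in
every Fourier slice: the middle factor of a t-SVD. -/
def IsFDiagSorted {p q k : ℕ} (S : Tensor p q k) : Prop :=
  (∀ j : Fin k, ∀ i : Fin p, ∀ i' : Fin q, (i : ℕ) ≠ (i' : ℕ) → slice S j i i' = 0) ∧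
  (∀ j : Fin k, ∀ i : Fin p, ∀ i' : Fin q, (i : ℕ) = (i' : ℕ) →
    (slice S j i i').im = 0 ∧ 0 ≤ (slice S j i i').re) ∧
  (∀ j : Fin k, ∀ i₁ i₂ : Fin p, ∀ i₁' i₂' : Fin q, (i₁ : ℕ) = (i₁' : ℕ) →
    (i₂ : ℕ) = (i₂' : ℕ) → (i₁ : ℕ) ≤ (i₂ : ℕ) →
    (slice S j i₂ i₂').re ≤ (slice S j i₁ i₁').re)

/-- `(V, S, W)` is a t-SVD of `T`. -/
def IsTSVD {p q k : ℕ} (T : Tensor p q k) (V : Tensor p p k) (S : Tensor p q k)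
    (W : Tensor q q k) : Prop :=
  Orthogonal V ∧ Orthogonal W ∧ IsFDiagSorted S ∧ T = tprod V (tprod S (ttr W))



/-! ### Auxiliary lemmas for `statement1` -/

noncomputable def auxE {k : ℕ} (j l : Fin k) : ℂ :=
  Complex.exp (-(2 * (Real.pi : ℂ) * Complex.I * ((j : ℕ) : ℂ) * ((l : ℕ) : ℂ)) / ((k : ℕ) : ℂ))

lemma auxE_add {k : ℕ} (j a b : Fin k) : auxE j (a + b) = auxE j a * auxE j b := by
  have hk0 : k ≠ 0 := a.pos.ne'
  have hk : ((k : ℕ) : ℂ) ≠ 0 := Nat.cast_ne_zero.2 hk0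
  set q : ℕ := (a.val + b.val) / k with hq
  have hmod : (a.val + b.val) = ((a + b : Fin k) : ℕ) + k * q := by
    rw [Fin.val_add, hq]; exact (Nat.mod_add_div _ _).symm
  have hcast : ((a:ℕ):ℂ) + ((b:ℕ):ℂ) = (((a+b : Fin k):ℕ):ℂ) + (k:ℂ) * (q:ℂ) := by
    exact_mod_cast congrArg (fun x : ℕ => (x:ℂ)) hmod
  have heq : (-(2 * (Real.pi : ℂ) * Complex.I * ((j : ℕ) : ℂ) * ((a : ℕ) : ℂ)) / ((k : ℕ) : ℂ))
      + (-(2 * (Real.pi : ℂ) * Complex.I * ((j : ℕ) : ℂ) * ((b : ℕ) : ℂ)) / ((k : ℕ) : ℂ))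
      = (-(2 * (Real.pi : ℂ) * Complex.I * ((j : ℕ) : ℂ) * (((a+b:Fin k) : ℕ) : ℂ)) / ((k : ℕ) : ℂ))
      + ((-(((j:ℕ) : ℤ) * (q : ℤ)) : ℤ) : ℂ) * (2 * Real.pi * Complex.I) := by
    push_cast
    have hkq : (k:ℂ) * (q:ℂ) / (k:ℂ) = (q:ℂ) := by field_simp
    linear_combination (-(2 * (Real.pi:ℂ) * Complex.I * ((j:ℕ):ℂ)) / (k:ℂ)) * hcast
      - (2 * (Real.pi:ℂ) * Complex.I * ((j:ℕ):ℂ)) * hkq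
  rw [auxE, auxE, auxE, ← Complex.exp_add, heq, Complex.exp_add,
    Complex.exp_int_mul_two_pi_mul_I, mul_one]

lemma slice_tprod {m q n k : ℕ} (A : Tensor m q k) (B : Tensor q n k) (j : Fin k) :
    slice (tprod A B) j = slice A j * slice B j := by
  funext i i'
  show (∑ l : Fin k, ((tprod A B i i' l : ℝ) : ℂ) * auxE j l) = _
  rw [Matrix.mul_apply]
  have step1 : ∀ l : Fin k, ((tprod A B i i' l : ℝ) : ℂ) * auxE j l
      = ∑ p : Fin q, ∑ l' : Fin k, ((A i p l' : ℂ) * (B p i' (l - l') : ℂ)) * auxE j l := by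
    intro l
    rw [tprod]
    push_cast
    rw [Finset.sum_mul]
    exact Finset.sum_congr rfl fun p _ => by rw [Finset.sum_mul]
  rw [Finset.sum_congr rfl fun l _ => step1 l]
  rw [Finset.sum_comm]
  refine Finset.sum_congr rfl fun p _ => ?_
  rw [Finset.sum_comm]
  show (∑ l' : Fin k, ∑ l : Fin k, ((A i p l' : ℂ) * (B p i' (l - l') : ℂ)) * auxE j l)
      = (∑ l' : Fin k, (A i p l' : ℂ) * auxE j l') * (∑ s : Fin k, (B p i' s : ℂ) * auxE j s)
  rw [Finset.sum_mul]
  refine Finset.sum_congr rfl fun l' _ => ?_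
  haveI : NeZero k := ⟨l'.pos.ne'⟩
  rw [← Equiv.sum_comp (Equiv.addLeft l') (fun l => ((A i p l' : ℂ) * (B p i' (l - l') : ℂ)) * auxE j l)]
  rw [Finset.mul_sum]
  apply Finset.sum_congr rfl
  intro s _
  simp only [Equiv.coe_addLeft]
  rw [add_sub_cancel_left, auxE_add]
  ring

lemma tprod_zero_left {m q n k : ℕ} (B : Tensor q n k) :
    tprod (0 : Tensor m q k) B = 0 := by
  funext i i' l; simp [tprod]

lemma tprod_zero_right {m q n k : ℕ} (A : Tensor m q k) :
    tprod A (0 : Tensor q n k) = 0 := by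
  funext i i' l; simp [tprod]

lemma ttr_zero {m n k : ℕ} : ttr (0 : Tensor m n k) = 0 := rfl

lemma ttr_ttr {m n k : ℕ} (T : Tensor m n k) : ttr (ttr T) = T := by
  funext i i' j; simp [ttr]

lemma ttr_tprod {m q n k : ℕ} (A : Tensor m q k) (B : Tensor q n k) :
    ttr (tprod A B) = tprod (ttr B) (ttr A) := by
  funext i i' l
  haveI : NeZero k := ⟨l.pos.ne'⟩
  show (∑ p : Fin q, ∑ l' : Fin k, A i' p l' * B p i (-l - l'))
      = ∑ p : Fin q, ∑ l' : Fin k, B p i (-l') * A i' p (-(l - l'))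
  refine Finset.sum_congr rfl fun p _ => ?_
  rw [← Equiv.sum_comp (Equiv.addRight l) (fun l' => B p i (-l') * A i' p (-(l - l')))]
  refine Finset.sum_congr rfl fun t _ => ?_
  simp only [Equiv.coe_addRight]
  rw [mul_comm]
  congr 1
  · congr 1; abel
  · congr 1; abel

lemma tprod_assoc {m a b n k : ℕ} (A : Tensor m a k) (B : Tensor a b k) (C : Tensor b n k) :
    tprod (tprod A B) C = tprod A (tprod B C) := by
  funext i i' l
  haveI : NeZero k := ⟨l.pos.ne'⟩
  show (∑ q : Fin b, ∑ s : Fin k, (∑ p : Fin a, ∑ l' : Fin k, A i p l' * B p q (s - l')) * C q i' (l - s))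
      = ∑ p : Fin a, ∑ l' : Fin k, A i p l' * (∑ q : Fin b, ∑ s : Fin k, B p q s * C q i' (l - l' - s))
  have e1 : (∑ q : Fin b, ∑ s : Fin k, (∑ p : Fin a, ∑ l' : Fin k, A i p l' * B p q (s - l')) * C q i' (l - s))
      = ∑ q : Fin b, ∑ s : Fin k, ∑ p : Fin a, ∑ l' : Fin k,
          A i p l' * B p q (s - l') * C q i' (l - s) :=
    Finset.sum_congr rfl fun q _ => Finset.sum_congr rfl fun s _ => by
      rw [Finset.sum_mul]
      exact Finset.sum_congr rfl fun p _ => by rw [Finset.sum_mul]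
  have e2 : (∑ q : Fin b, ∑ s : Fin k, ∑ p : Fin a, ∑ l' : Fin k,
          A i p l' * B p q (s - l') * C q i' (l - s))
      = ∑ p : Fin a, ∑ q : Fin b, ∑ s : Fin k, ∑ l' : Fin k,
          A i p l' * B p q (s - l') * C q i' (l - s) := by
    rw [show (∑ q : Fin b, ∑ s : Fin k, ∑ p : Fin a, ∑ l' : Fin k,
          A i p l' * B p q (s - l') * C q i' (l - s))
        = ∑ q : Fin b, ∑ p : Fin a, ∑ s : Fin k, ∑ l' : Fin k,
          A i p l' * B p q (s - l') * C q i' (l - s) from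
      Finset.sum_congr rfl fun q _ => Finset.sum_comm]
    exact Finset.sum_comm
  have e3 : ∀ p : Fin a, (∑ q : Fin b, ∑ s : Fin k, ∑ l' : Fin k,
          A i p l' * B p q (s - l') * C q i' (l - s))
      = ∑ l' : Fin k, ∑ q : Fin b, ∑ s : Fin k,
          A i p l' * B p q (s - l') * C q i' (l - s) := fun p => by
    rw [show (∑ q : Fin b, ∑ s : Fin k, ∑ l' : Fin k,
          A i p l' * B p q (s - l') * C q i' (l - s))
        = ∑ q : Fin b, ∑ l' : Fin k, ∑ s : Fin k,
          A i p l' * B p q (s - l') * C q i' (l - s) from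
      Finset.sum_congr rfl fun q _ => Finset.sum_comm]
    exact Finset.sum_comm
  rw [e1, e2]
  refine Finset.sum_congr rfl fun p _ => ?_
  rw [e3 p]
  refine Finset.sum_congr rfl fun l' _ => ?_
  rw [Finset.mul_sum]
  refine Finset.sum_congr rfl fun q _ => ?_
  rw [Finset.mul_sum,
    ← Equiv.sum_comp (Equiv.addRight l') (fun s => A i p l' * B p q (s - l') * C q i' (l - s))]
  refine Finset.sum_congr rfl fun s _ => ?_
  simp only [Equiv.coe_addRight]
  rw [add_sub_cancel_right, mul_assoc]
  congr 2
  abel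


/-- With the signal–noise decomposition
`U_t = U_t*W_t*W_tᵀ + U_t*W_{t,⊥}*W_{t,⊥}ᵀ`:
(i) `V_Xᵀ*U_t*W_{t,⊥}*W_{t,⊥}ᵀ = 0`;
(ii) if every Fourier slice of `V_Xᵀ*U_t` has full rank `r`, then every Fourier slice of
the signal term `U_t*W_t*W_tᵀ` has rank `r`, and the noise term `U_t*W_{t,⊥}*W_{t,⊥}ᵀ`
has tubal rank at most `R − r`. -/
theorem statement1 {n r R k : ℕ} (hr : r ≤ n) (hrR : r ≤ R)
    (X : Tensor n r k) (hrank : trank X = r)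
    (U : Tensor n R k)
    (VX : Tensor n r k) (hVX : IsColBasis X VX)
    (W : Tensor R r k) (hW : ONB W)
    (hWfact : tprod (tprod (ttr VX) U) (tprod W (ttr W)) = tprod (ttr VX) U)
    (Wp : Tensor R (R - r) k) (hWp : IsOrthCompl W Wp) :
    tprod (ttr VX) (tprod U (tprod Wp (ttr Wp))) = 0 ∧
    ((∀ j : Fin k, (slice (tprod (ttr VX) U) j).rank = r) →
      (∀ j : Fin k, (slice (tprod U (tprod W (ttr W))) j).rank = r) ∧
        trank (tprod U (tprod Wp (ttr Wp))) ≤ R - r) := by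
  constructor
  · -- part (i)
    have hWWp0 : tprod (ttr W) Wp = 0 := by
      have h := congrArg ttr hWp.2.1
      rwa [ttr_tprod, ttr_ttr, ttr_zero] at h
    have hinner : tprod (tprod W (ttr W)) (tprod Wp (ttr Wp)) = 0 := by
      rw [tprod_assoc, ← tprod_assoc (ttr W) Wp (ttr Wp), hWWp0, tprod_zero_left,
        tprod_zero_right]
    calc tprod (ttr VX) (tprod U (tprod Wp (ttr Wp)))
        = tprod (tprod (ttr VX) U) (tprod Wp (ttr Wp)) := (tprod_assoc _ _ _).symm
      _ = tprod (tprod (tprod (ttr VX) U) (tprod W (ttr W))) (tprod Wp (ttr Wp)) := by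
          rw [hWfact]
      _ = tprod (tprod (ttr VX) U) (tprod (tprod W (ttr W)) (tprod Wp (ttr Wp))) :=
          tprod_assoc _ _ _
      _ = 0 := by rw [hinner, tprod_zero_right]
  · -- part (ii)
    intro hrk
    constructor
    · intro j
      have hsl : slice (tprod U (tprod W (ttr W))) j
          = slice U j * (slice W j * slice (ttr W) j) := by
        rw [slice_tprod, slice_tprod]
      have hfact : (slice (ttr VX) j * slice U j) * (slice W j * slice (ttr W) j)
          = slice (ttr VX) j * slice U j := by
        have h := congrArg (fun T => slice T j) hWfact
        simpa only [slice_tprod] using h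
      have hMr : (slice (ttr VX) j * slice U j).rank = r := by
        have h := hrk j
        rwa [slice_tprod] at h
      have hle : (slice U j * (slice W j * slice (ttr W) j)).rank ≤ r := by
        calc (slice U j * (slice W j * slice (ttr W) j)).rank
            = ((slice U j * slice W j) * slice (ttr W) j).rank := by
              rw [Matrix.mul_assoc]
          _ ≤ (slice U j * slice W j).rank := Matrix.rank_mul_le_left _ _
          _ ≤ Fintype.card (Fin r) := Matrix.rank_le_card_width _
          _ = r := Fintype.card_fin r
      have hge : r ≤ (slice U j * (slice W j * slice (ttr W) j)).rank := by
        calc r = (slice (ttr VX) j * slice U j).rank := hMr.symm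
          _ = ((slice (ttr VX) j * slice U j) * (slice W j * slice (ttr W) j)).rank := by
              rw [hfact]
          _ = (slice (ttr VX) j * (slice U j * (slice W j * slice (ttr W) j))).rank := by
              rw [Matrix.mul_assoc]
          _ ≤ (slice U j * (slice W j * slice (ttr W) j)).rank :=
              Matrix.rank_mul_le_right _ _
      rw [hsl]
      exact le_antisymm hle hge
    · refine Finset.sup_le fun j _ => ?_
      calc (slice (tprod U (tprod Wp (ttr Wp))) j).rank
          = ((slice U j * slice Wp j) * slice (ttr Wp) j).rank := by
            rw [slice_tprod, slice_tprod, Matrix.mul_assoc]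
        _ ≤ (slice U j * slice Wp j).rank := Matrix.rank_mul_le_left _ _
        _ ≤ Fintype.card (Fin (R - r)) := Matrix.rank_le_card_width _
        _ = R - r := Fintype.card_fin _


end Tubal
end

section
/- Suppose 𝒜 : S^{n×n×k} → ℝ^m satisfies RIP(r+r′, δ) with 0 < δ < 1. Then for any tubal-symmetric tensors Z, Y ∈ S^{n×n×k} with tubal rank(Z) ≤ r and tubal rank(Y) ≤ r′, one has |⟨(ℐ − 𝒜*𝒜)(Z), Y⟩| ≤ δ·‖Z‖_F·‖Y‖_F. -/
open scoped BigOperators ComplexOrder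
open MeasureTheory

namespace Tubal

section Aux

open Module

lemma matrix_rank_add_le {p q : ℕ} (M N : Matrix (Fin p) (Fin q) ℂ) :
    (M + N).rank ≤ M.rank + N.rank := by
  classical
  have h : LinearMap.range (M + N).mulVecLin ≤
      LinearMap.range M.mulVecLin ⊔ LinearMap.range N.mulVecLin := by
    rintro x ⟨v, rfl⟩
    rw [Matrix.mulVecLin_add]
    exact Submodule.mem_sup.2 ⟨_, ⟨v, rfl⟩, _, ⟨v, rfl⟩, by simp⟩
  calc (M + N).rank ≤ finrank ℂ ↑(LinearMap.range M.mulVecLin ⊔ LinearMap.range N.mulVecLin) :=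
        Submodule.finrank_mono h
    _ ≤ M.rank + N.rank := Submodule.finrank_add_le_finrank_add_finrank _ _

lemma matrix_rank_smul_le {p q : ℕ} (c : ℂ) (M : Matrix (Fin p) (Fin q) ℂ) :
    (c • M).rank ≤ M.rank := by
  have : c • M = (c • (1 : Matrix (Fin p) (Fin p) ℂ)) * M := by
    rw [Matrix.smul_mul, Matrix.one_mul]
  rw [this]
  exact Matrix.rank_mul_le_right _ _

lemma slice_add' {p q k : ℕ} (Z Y : Tensor p q k) (j : Fin k) :
    slice (Z + Y) j = slice Z j + slice Y j := by
  funext i i'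
  simp [slice, Finset.sum_add_distrib, add_mul]

lemma slice_smul' {p q k : ℕ} (t : ℝ) (Z : Tensor p q k) (j : Fin k) :
    slice (t • Z) j = (t : ℂ) • slice Z j := by
  funext i i'
  simp [slice, Finset.mul_sum, mul_assoc]

lemma slice_rank_le_trank {p q k : ℕ} (W : Tensor p q k) (j : Fin k) :
    (slice W j).rank ≤ trank W := by
  unfold trank
  exact Finset.le_sup (f := fun j => (slice W j).rank) (Finset.mem_univ j)

lemma trank_add_le {p q k : ℕ} (Z Y : Tensor p q k) :
    trank (Z + Y) ≤ trank Z + trank Y := by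
  apply Finset.sup_le
  intro j _
  rw [slice_add']
  exact le_trans (matrix_rank_add_le _ _)
    (add_le_add (slice_rank_le_trank Z j) (slice_rank_le_trank Y j))

lemma trank_smul_le {p q k : ℕ} (t : ℝ) (Z : Tensor p q k) :
    trank (t • Z) ≤ trank Z := by
  apply Finset.sup_le
  intro j _
  rw [slice_smul']
  exact le_trans (matrix_rank_smul_le _ _) (slice_rank_le_trank Z j)

lemma ttr_add' {p q k : ℕ} (Z Y : Tensor p q k) : ttr (Z + Y) = ttr Z + ttr Y := rfl

lemma ttr_sub' {p q k : ℕ} (Z Y : Tensor p q k) : ttr (Z - Y) = ttr Z - ttr Y := rfl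

lemma ttr_smul' {p q k : ℕ} (t : ℝ) (Z : Tensor p q k) : ttr (t • Z) = t • ttr Z := rfl

lemma tinner_add_right {p q k : ℕ} (T P Q : Tensor p q k) :
    tinner T (P + Q) = tinner T P + tinner T Q := by
  simp [tinner, mul_add, Finset.sum_add_distrib]

lemma tinner_sub_right {p q k : ℕ} (T P Q : Tensor p q k) :
    tinner T (P - Q) = tinner T P - tinner T Q := by
  simp [tinner, mul_sub, Finset.sum_sub_distrib]

lemma tinner_smul_right {p q k : ℕ} (T : Tensor p q k) (t : ℝ) (P : Tensor p q k) :
    tinner T (t • P) = t * tinner T P := by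
  simp [tinner, Pi.smul_apply, smul_eq_mul, Finset.mul_sum, mul_left_comm]

lemma tinner_comm' {p q k : ℕ} (T P : Tensor p q k) : tinner T P = tinner P T := by
  simp [tinner, mul_comm]

lemma tinner_smul_left {p q k : ℕ} (t : ℝ) (T P : Tensor p q k) :
    tinner (t • T) P = t * tinner T P := by
  rw [tinner_comm', tinner_smul_right, tinner_comm']

lemma tinner_sub_left {p q k : ℕ} (T P Q : Tensor p q k) :
    tinner (P - Q) T = tinner P T - tinner Q T := by
  rw [tinner_comm', tinner_sub_right, tinner_comm' T P, tinner_comm' T Q]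

lemma frob_sq {p q k : ℕ} (W : Tensor p q k) : frobNorm W ^ 2 = tinner W W := by
  rw [frobNorm, Real.sq_sqrt (by positivity)]
  simp [tinner, sq]

lemma frob_nonneg {p q k : ℕ} (W : Tensor p q k) : 0 ≤ frobNorm W := Real.sqrt_nonneg _

lemma tinner_sum_left {p q k : ℕ} {ι : Type*} [Fintype ι] [DecidableEq ι]
    (f : ι → Tensor p q k) (Y : Tensor p q k) (s : Finset ι) :
    tinner (∑ i ∈ s, f i) Y = ∑ i ∈ s, tinner (f i) Y := by
  induction s using Finset.induction with
  | empty => simp [tinner]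
  | insert _ _ h ih =>
      rw [Finset.sum_insert h, Finset.sum_insert h, tinner_comm', tinner_add_right,
        tinner_comm' _ (f _), tinner_comm' _ (∑ i ∈ _, f i), ih]

lemma tinner_AtA {n k m : ℕ} (A : Fin m → Tensor n n k) (Z Y : Tensor n n k) :
    tinner (AtA A Z) Y = ∑ i, tinner (A i) Z * tinner (A i) Y := by
  have hA : AtA A Z = ∑ i, tinner (A i) Z • A i := by
    funext p q l
    simp [AtA, Finset.sum_apply]
  rw [hA, tinner_sum_left]
  refine Finset.sum_congr rfl fun i _ => ?_
  rw [tinner_comm', tinner_smul_right, tinner_comm' Y (A i)]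

lemma frob_eq_zero {p q k : ℕ} {W : Tensor p q k} (h : frobNorm W = 0) : W = 0 := by
  have hs : tinner W W = 0 := by rw [← frob_sq, h]; ring
  rw [tinner] at hs
  funext i i' j
  have h1 := (Finset.sum_eq_zero_iff_of_nonneg
    (fun i _ => Finset.sum_nonneg fun i' _ => Finset.sum_nonneg fun j _ =>
      mul_self_nonneg _)).1 hs i (Finset.mem_univ i)
  have h2 := (Finset.sum_eq_zero_iff_of_nonneg
    (fun i' _ => Finset.sum_nonneg fun j _ => mul_self_nonneg _)).1 h1 i'
    (Finset.mem_univ i')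
  have h3 := (Finset.sum_eq_zero_iff_of_nonneg (fun j _ => mul_self_nonneg _)).1 h2 j
    (Finset.mem_univ j)
  exact mul_self_eq_zero.1 h3

end Aux

/-- If `𝒜` satisfies RIP(r+r′, δ) with `0 < δ < 1`, then for all
tubal-symmetric `Z, Y` with tubal ranks `≤ r` and `≤ r′`,
`|⟨(ℐ − 𝒜*𝒜)(Z), Y⟩| ≤ δ·‖Z‖_F·‖Y‖_F`. -/
theorem statement18 {n k m r r' : ℕ} (A : Fin m → Tensor n n k)
    (hAsym : ∀ i, ttr (A i) = A i) (δ : ℝ) (hδ0 : 0 < δ) (hδ1 : δ < 1)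
    (hRIP : RIP A (r + r') δ) :
    ∀ Z Y : Tensor n n k, ttr Z = Z → ttr Y = Y → trank Z ≤ r → trank Y ≤ r' →
      |tinner (Z - AtA A Z) Y| ≤ δ * frobNorm Z * frobNorm Y := by
  have key : ∀ P Q : Tensor n n k, ttr P = P → ttr Q = Q → trank P ≤ r → trank Q ≤ r' →
      |tinner P Q - ∑ i, tinner (A i) P * tinner (A i) Q| ≤
        δ / 2 * (frobNorm P ^ 2 + frobNorm Q ^ 2) := by
    intro P Q hP hQ hrP hrQ
    have hsum : ttr (P + Q) = P + Q := by rw [ttr_add', hP, hQ]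
    have hsub : ttr (P - Q) = P - Q := by rw [ttr_sub', hP, hQ]
    have h1 := hRIP (P + Q) hsum (le_trans (trank_add_le P Q) (add_le_add hrP hrQ))
    have h2 := hRIP (P - Q) hsub (by
      have hPQ : P - Q = P + (-1 : ℝ) • Q := by funext a b c; simp; ring
      rw [hPQ]
      exact le_trans (trank_add_le _ _) (add_le_add hrP (le_trans (trank_smul_le _ _) hrQ)))
    have fP : frobNorm (P + Q) ^ 2 =
        frobNorm P ^ 2 + 2 * tinner P Q + frobNorm Q ^ 2 := by
      rw [frob_sq, frob_sq, frob_sq, tinner_add_right, tinner_comm' (P + Q) P,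
        tinner_comm' (P + Q) Q, tinner_add_right, tinner_add_right, tinner_comm' Q P]
      ring
    have fM : frobNorm (P - Q) ^ 2 =
        frobNorm P ^ 2 - 2 * tinner P Q + frobNorm Q ^ 2 := by
      rw [frob_sq, frob_sq, frob_sq, tinner_sub_right, tinner_comm' (P - Q) P,
        tinner_comm' (P - Q) Q, tinner_sub_right, tinner_sub_right, tinner_comm' Q P]
      ring
    have hdiff : (∑ i, tinner (A i) (P + Q) ^ 2) - (∑ i, tinner (A i) (P - Q) ^ 2) =
        4 * ∑ i, tinner (A i) P * tinner (A i) Q := by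
      rw [← Finset.sum_sub_distrib, Finset.mul_sum]
      refine Finset.sum_congr rfl fun i _ => ?_
      rw [tinner_add_right, tinner_sub_right]
      ring
    rw [fP] at h1
    rw [fM] at h2
    rw [abs_le]
    constructor <;> nlinarith [h1.1, h1.2, h2.1, h2.2, hdiff]
  intro Z Y hZsym hYsym hrZ hrY
  have hrw : tinner (Z - AtA A Z) Y =
      tinner Z Y - ∑ i, tinner (A i) Z * tinner (A i) Y := by
    rw [tinner_sub_left, tinner_AtA]
  rw [hrw]
  by_cases hZ0 : frobNorm Z = 0
  · have hz : Z = 0 := frob_eq_zero hZ0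
    subst hz
    simp [tinner, frobNorm]
  by_cases hY0 : frobNorm Y = 0
  · have hy : Y = 0 := frob_eq_zero hY0
    subst hy
    simp [tinner, frobNorm]
  have hZpos : 0 < frobNorm Z := lt_of_le_of_ne (frob_nonneg Z) (Ne.symm hZ0)
  have hYpos : 0 < frobNorm Y := lt_of_le_of_ne (frob_nonneg Y) (Ne.symm hY0)
  set t : ℝ := frobNorm Y / frobNorm Z with ht_def
  have ht : 0 < t := div_pos hYpos hZpos
  have h := key (t • Z) Y (by rw [ttr_smul', hZsym]) hYsym
    (le_trans (trank_smul_le t Z) hrZ) hrY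
  have hfs : frobNorm (t • Z) ^ 2 = frobNorm Y ^ 2 := by
    rw [frob_sq, tinner_smul_left, tinner_smul_right, ← frob_sq, ht_def]
    field_simp
  have hss : (∑ i, tinner (A i) (t • Z) * tinner (A i) Y) =
      t * ∑ i, tinner (A i) Z * tinner (A i) Y := by
    rw [Finset.mul_sum]
    refine Finset.sum_congr rfl fun i _ => ?_
    rw [tinner_smul_right]
    ring
  rw [tinner_smul_left, hfs, hss] at h
  have habs : |t * tinner Z Y - t * ∑ i, tinner (A i) Z * tinner (A i) Y| =
      t * |tinner Z Y - ∑ i, tinner (A i) Z * tinner (A i) Y| := by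
    rw [← mul_sub, abs_mul, abs_of_pos ht]
  rw [habs] at h
  have hrhs : t * (δ * frobNorm Z * frobNorm Y) = δ / 2 * (frobNorm Y ^ 2 + frobNorm Y ^ 2) := by
    rw [ht_def]
    field_simp
    ring
  exact le_of_mul_le_mul_left (by linarith) ht

end Tubal
end
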